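/- arXiv:1405.3147 — 4 statements merged into one kernel-verified Lean document; each statement's English description precedes it below -/
import Mathlib

section
/- Let E be a normed vector space over ℂ (or ℝ), let r ≥ 1 be an integer, let c₁, …, c_r be pairwise distinct positive reals, and let a₁, …, a_r be reals satisfying a₁ + … + a_r = 1 and Σᵢ aᵢcᵢ^{2k} = 0 for k = 1, …, r−1. Let ψ, g₁, …, g_{r−1} ∈ E, let C ≥ 0, τ > 0, and let Ψ₁, …, Ψ_r ∈ E satisfy ‖ψ − Ψᵢ − Σ_{k=1}^{r−1} g_k·(cᵢτ)^{2k}‖ ≤ C·(cᵢτ)^{2r} for each i = 1, …, r. Then ‖ψ − Σᵢ aᵢΨᵢ‖ ≤ (Σᵢ |aᵢ|·cᵢ^{2r})·C·τ^{2r}. -/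
open Finset

/-- Error bound for the Richardson extrapolation in time: if each approximation
`Ψ i` (computed with time step `c i * τ`) admits the error expansion
`ψ - Ψ i = ∑_{k=1}^{r-1} (c i * τ)^(2k) • g k + O((c i * τ)^(2r))`, and the
coefficients `a` satisfy the moment conditions, then the linear combination
`∑ a i • Ψ i` approximates `ψ` with accuracy `O(τ^(2r))`. -/
theorem richardson_extrapolation_error_bound
    {E : Type*} [NormedAddCommGroup E] [NormedSpace ℝ E]
    (r : ℕ) (hr : 1 ≤ r) (c : Fin r → ℝ)
    (hcpos : ∀ i, 0 < c i) (hcdist : Function.Injective c)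
    (a : Fin r → ℝ) (ha1 : ∑ i, a i = 1)
    (hamom : ∀ k : ℕ, 1 ≤ k → k ≤ r - 1 → ∑ i, a i * (c i) ^ (2 * k) = 0)
    (ψ : E) (g : ℕ → E) (C : ℝ) (hC : 0 ≤ C) (τ : ℝ) (hτ : 0 < τ)
    (Ψ : Fin r → E)
    (hΨ : ∀ i, ‖ψ - Ψ i - ∑ k ∈ Icc 1 (r - 1), ((c i * τ) ^ (2 * k)) • g k‖
            ≤ C * (c i * τ) ^ (2 * r)) :
    ‖ψ - ∑ i, a i • Ψ i‖ ≤ (∑ i, |a i| * (c i) ^ (2 * r)) * C * τ ^ (2 * r) := by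
  set D : Fin r → E := fun i =>
    ψ - Ψ i - ∑ k ∈ Icc 1 (r - 1), ((c i * τ) ^ (2 * k)) • g k with hD
  have key : ψ - ∑ i, a i • Ψ i = ∑ i, a i • D i := by
    have h1 : ∑ i, a i • D i
        = (∑ i, a i • ψ) - (∑ i, a i • Ψ i)
          - ∑ i, a i • ∑ k ∈ Icc 1 (r - 1), ((c i * τ) ^ (2 * k)) • g k := by
      simp [hD, smul_sub, Finset.sum_sub_distrib]
    have h2 : (∑ i, a i • ψ) = ψ := by
      rw [← Finset.sum_smul, ha1, one_smul]
    have h3 : ∑ i, a i • ∑ k ∈ Icc 1 (r - 1), ((c i * τ) ^ (2 * k)) • g k = 0 := by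
      simp_rw [Finset.smul_sum]
      rw [Finset.sum_comm]
      refine Finset.sum_eq_zero fun k hk => ?_
      simp only [Finset.mem_Icc] at hk
      have hm := hamom k hk.1 hk.2
      have : ∑ i, a i • ((c i * τ) ^ (2 * k)) • g k
          = ((∑ i, a i * (c i) ^ (2 * k)) * τ ^ (2 * k)) • g k := by
        rw [Finset.sum_mul, Finset.sum_smul]
        refine Finset.sum_congr rfl fun i _ => ?_
        rw [smul_smul, mul_pow]
        ring_nf
      rw [this, hm, zero_mul, zero_smul]
    rw [h1, h2, h3, sub_zero]
  rw [key]
  calc ‖∑ i, a i • D i‖ ≤ ∑ i, ‖a i • D i‖ := norm_sum_le _ _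
    _ ≤ ∑ i, |a i| * (C * (c i * τ) ^ (2 * r)) := by
        refine Finset.sum_le_sum fun i _ => ?_
        rw [norm_smul, Real.norm_eq_abs]
        exact mul_le_mul_of_nonneg_left (hΨ i) (abs_nonneg _)
    _ = (∑ i, |a i| * (c i) ^ (2 * r)) * C * τ ^ (2 * r) := by
        rw [Finset.sum_mul, Finset.sum_mul]
        refine Finset.sum_congr rfl fun i _ => ?_
        rw [mul_pow]; ring
end

section
/- Let V be a complex inner product space, let L : V × V → ℂ be a sesquilinear form that is Hermitian-symmetric (L(w,φ) = conj(L(φ,w)) for all w, φ ∈ V; in particular L(w,w) ∈ ℝ), let ħ > 0, τ > 0 and M ≥ 1 an integer. Suppose Ψ⁰, Ψ¹, …, Ψ^M ∈ V and F¹, …, F^M ∈ V satisfy, for every m with 1 ≤ m ≤ M and every φ ∈ V, the Crank–Nicolson identity iħ·⟨(Ψ^m − Ψ^{m−1})/τ, φ⟩ = L((Ψ^{m−1} + Ψ^m)/2, φ) + ⟨F^m, φ⟩. Then max_{0 ≤ m ≤ M} ‖Ψ^m‖ ≤ ‖Ψ⁰‖ + (2/ħ)·Σ_{m=1}^M ‖F^m‖·τ.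 -/
open Finset
open scoped InnerProductSpace ComplexConjugate

theorem cn_Lterm_real {V : Type*} [AddCommGroup V] [Module ℂ V]
    (L : V → V → ℂ)
    (hL_lin : ∀ (a : ℂ) (w w' φ : V), L (a • w + w') φ = a * L w φ + L w' φ)
    (hL_herm : ∀ w φ : V, L w φ = conj (L φ w)) (u : V) :
    (L ((2⁻¹ : ℝ) • u) u).im = 0 := by
  have h0 : L 0 u = 0 := by simpa using hL_lin 1 0 0 u
  have h1 : L ((2⁻¹ : ℝ) • u) u = ((2⁻¹ : ℝ) : ℂ) * L u u := by
    have h : ((2⁻¹ : ℝ) • u : V) = ((2⁻¹ : ℝ) : ℂ) • u + 0 := by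
      rw [add_zero]; exact rfl
    rw [h, hL_lin, h0, add_zero]
  have h2 : (L u u).im = 0 := by
    have := congrArg Complex.im (hL_herm u u)
    simp at this; linarith
  rw [h1]
  simp [Complex.mul_im, h2]

theorem cn_step {V : Type*} [NormedAddCommGroup V] [InnerProductSpace ℂ V]
    (hbar τ : ℝ) (hhbar : 0 < hbar) (hτ : 0 < τ)
    (p q f : V) (Lterm : ℂ) (hLim : Lterm.im = 0)
    (heq : Complex.I * (hbar : ℂ) * ⟪p + q, (τ⁻¹ : ℝ) • (q - p)⟫_ℂ
      = Lterm + ⟪p + q, f⟫_ℂ) :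
    ‖q‖ ≤ ‖p‖ + (τ / hbar) * ‖f‖ := by
  have hsm : ((τ⁻¹ : ℝ) • (q - p) : V) = ((τ⁻¹ : ℝ) : ℂ) • (q - p) := rfl
  rw [hsm, inner_smul_right] at heq
  have him := congrArg Complex.im heq
  have hre : (⟪p + q, q - p⟫_ℂ).re = ‖q‖ ^ 2 - ‖p‖ ^ 2 := by
    have hpq : (⟪q, p⟫_ℂ).re = (⟪p, q⟫_ℂ).re := by
      rw [← inner_conj_symm p q, Complex.conj_re]
    have hpp : ⟪p, p⟫_ℂ = ((‖p‖ : ℂ) ^ 2) := inner_self_eq_norm_sq_to_K p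
    have hqq : ⟪q, q⟫_ℂ = ((‖q‖ : ℂ) ^ 2) := inner_self_eq_norm_sq_to_K q
    rw [inner_sub_right, inner_add_left, inner_add_left, hpp, hqq]
    simp only [Complex.add_re, Complex.sub_re, ← Complex.ofReal_pow,
      Complex.ofReal_re, hpq]
    ring
  simp only [Complex.mul_im, Complex.mul_re, Complex.add_im, hLim, Complex.I_re,
    Complex.I_im, Complex.ofReal_re, Complex.ofReal_im] at him
  rw [hre] at him
  ring_nf at him
  have hb : |(⟪p + q, f⟫_ℂ).im| ≤ (‖p‖ + ‖q‖) * ‖f‖ := by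
    calc |(⟪p + q, f⟫_ℂ).im| ≤ ‖(⟪p + q, f⟫_ℂ : ℂ)‖ := Complex.abs_im_le_norm _
    _ ≤ ‖p + q‖ * ‖f‖ := norm_inner_le_norm _ _
    _ ≤ (‖p‖ + ‖q‖) * ‖f‖ := by
        have := norm_add_le p q
        nlinarith [norm_nonneg f]
  have key : hbar * τ⁻¹ * ‖q‖ ^ 2 - hbar * τ⁻¹ * ‖p‖ ^ 2 ≤ (‖p‖ + ‖q‖) * ‖f‖ := by
    rw [him]; exact (abs_le.mp hb).2
  have key2 : hbar * ‖q‖ ^ 2 - hbar * ‖p‖ ^ 2 ≤ τ * ((‖p‖ + ‖q‖) * ‖f‖) := by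
    have h := mul_le_mul_of_nonneg_left key hτ.le
    have hτne : τ ≠ 0 := ne_of_gt hτ
    field_simp at h
    nlinarith [h]
  rw [div_mul_eq_mul_div, ← sub_le_iff_le_add', le_div_iff₀ hhbar]
  rcases le_or_gt (‖p‖ + ‖q‖) 0 with hle | hpos
  · have hp0 : ‖p‖ = 0 := by nlinarith [norm_nonneg p, norm_nonneg q]
    have hq0 : ‖q‖ = 0 := by nlinarith [norm_nonneg p, norm_nonneg q]
    rw [hp0, hq0]
    nlinarith [mul_nonneg hτ.le (norm_nonneg f)]
  · nlinarith [key2, hpos]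

/-- First stability bound (Proposition 1) for the Crank–Nicolson scheme in
abstract Hilbert-space form: if `ihbar⟨(Ψ^m − Ψ^{m−1})/τ, φ⟩ = L((Ψ^{m−1}+Ψ^m)/2, φ)
+ ⟨F^m, φ⟩` for all test elements `φ`, with `L` a Hermitian-symmetric
sesquilinear form, then `max_m ‖Ψ^m‖ ≤ ‖Ψ⁰‖ + (2/hbar) ∑_{m=1}^M ‖F^m‖ τ`.
The pairing `⟨w, φ⟩` (linear in `w`, conjugate-linear in `φ`) is realized as
Mathlib's inner product `⟪φ, w⟫_ℂ`. -/
theorem crank_nicolson_first_stability_bound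
    {V : Type*} [NormedAddCommGroup V] [InnerProductSpace ℂ V]
    (L : V → V → ℂ)
    (hL_lin : ∀ (a : ℂ) (w w' φ : V), L (a • w + w') φ = a * L w φ + L w' φ)
    (hL_conjlin : ∀ (a : ℂ) (w φ φ' : V), L w (a • φ + φ') = conj a * L w φ + L w φ')
    (hL_herm : ∀ w φ : V, L w φ = conj (L φ w))
    (hbar τ : ℝ) (hhbar : 0 < hbar) (hτ : 0 < τ)
    (M : ℕ) (hM : 1 ≤ M) (Ψ F : ℕ → V)
    (hscheme : ∀ m : ℕ, 1 ≤ m → m ≤ M → ∀ φ : V,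
      Complex.I * (hbar : ℂ) * ⟪φ, (τ⁻¹ : ℝ) • (Ψ m - Ψ (m - 1))⟫_ℂ
        = L ((2⁻¹ : ℝ) • (Ψ (m - 1) + Ψ m)) φ + ⟪φ, F m⟫_ℂ) :
    ∀ m : ℕ, m ≤ M →
      ‖Ψ m‖ ≤ ‖Ψ 0‖ + (2 / hbar) * ∑ l ∈ Icc 1 M, ‖F l‖ * τ := by
  have step : ∀ m : ℕ, 1 ≤ m → m ≤ M →
      ‖Ψ m‖ ≤ ‖Ψ (m - 1)‖ + (τ / hbar) * ‖F m‖ := by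
    intro m h1 h2
    exact cn_step hbar τ hhbar hτ (Ψ (m - 1)) (Ψ m) (F m)
      (L ((2⁻¹ : ℝ) • (Ψ (m - 1) + Ψ m)) (Ψ (m - 1) + Ψ m))
      (cn_Lterm_real L hL_lin hL_herm _)
      (hscheme m h1 h2 (Ψ (m - 1) + Ψ m))
  have main : ∀ m : ℕ, m ≤ M →
      ‖Ψ m‖ ≤ ‖Ψ 0‖ + (2 / hbar) * ∑ l ∈ Icc 1 m, ‖F l‖ * τ := by
    intro m
    induction m with
    | zero => intro _; simp
    | succ n ih =>
      intro h
      have hn := ih (Nat.le_of_succ_le h)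
      have hs := step (n + 1) (Nat.succ_le_succ (Nat.zero_le n)) h
      simp only [Nat.add_sub_cancel] at hs
      rw [Finset.sum_Icc_succ_top (Nat.succ_le_succ (Nat.zero_le n))]
      have hstep2 : (τ / hbar) * ‖F (n + 1)‖ ≤ (2 / hbar) * (‖F (n + 1)‖ * τ) := by
        rw [div_mul_eq_mul_div, div_mul_eq_mul_div, div_le_div_iff₀ hhbar hhbar]
        nlinarith [mul_nonneg (mul_nonneg hτ.le (norm_nonneg (F (n + 1)))) hhbar.le]
      rw [mul_add]
      linarith
  intro m hm
  have hsub : ∑ l ∈ Icc 1 m, ‖F l‖ * τ ≤ ∑ l ∈ Icc 1 M, ‖F l‖ * τ :=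
    Finset.sum_le_sum_of_subset_of_nonneg (Finset.Icc_subset_Icc_right hm)
      (fun i _ _ => mul_nonneg (norm_nonneg _) hτ.le)
  have hmul := mul_le_mul_of_nonneg_left hsub (by positivity : (0:ℝ) ≤ 2 / hbar)
  linarith [main m hm]
end

section
/- Let V be a complex inner product space, let L : V × V → ℂ be a sesquilinear form that is Hermitian-symmetric (L(w,φ) = conj(L(φ,w)) for all w, φ ∈ V), let ħ > 0, τ > 0 and M ≥ 1 an integer. Suppose Ψ⁰, Ψ¹, …, Ψ^M ∈ V satisfy, for every m with 1 ≤ m ≤ M and every φ ∈ V, the Crank–Nicolson identity iħ·⟨(Ψ^m − Ψ^{m−1})/τ, φ⟩ = L((Ψ^{m−1} + Ψ^m)/2, φ). Then ‖Ψ^m‖ = ‖Ψ⁰‖ for every m with 0 ≤ m ≤ M. -/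
open scoped InnerProductSpace ComplexConjugate

/-- Mass conservation of the Crank–Nicolson scheme in abstract Hilbert-space
form: if `ihbar⟨(Ψ^m − Ψ^{m−1})/τ, φ⟩ = L((Ψ^{m−1}+Ψ^m)/2, φ)` for all test
elements `φ`, with `L` a Hermitian-symmetric sesquilinear form, then
`‖Ψ^m‖ = ‖Ψ⁰‖` for all `0 ≤ m ≤ M`. The pairing `⟨w, φ⟩` (linear in `w`,
conjugate-linear in `φ`) is realized as Mathlib's inner product `⟪φ, w⟫_ℂ`. -/
theorem crank_nicolson_mass_conservation
    {V : Type*} [NormedAddCommGroup V] [InnerProductSpace ℂ V]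
    (L : V → V → ℂ)
    (hL_lin : ∀ (a : ℂ) (w w' φ : V), L (a • w + w') φ = a * L w φ + L w' φ)
    (hL_conjlin : ∀ (a : ℂ) (w φ φ' : V), L w (a • φ + φ') = conj a * L w φ + L w φ')
    (hL_herm : ∀ w φ : V, L w φ = conj (L φ w))
    (hbar τ : ℝ) (hhbar : 0 < hbar) (hτ : 0 < τ)
    (M : ℕ) (hM : 1 ≤ M) (Ψ : ℕ → V)
    (hscheme : ∀ m : ℕ, 1 ≤ m → m ≤ M → ∀ φ : V,
      Complex.I * (hbar : ℂ) * ⟪φ, (τ⁻¹ : ℝ) • (Ψ m - Ψ (m - 1))⟫_ℂ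
        = L ((2⁻¹ : ℝ) • (Ψ (m - 1) + Ψ m)) φ) :
    ∀ m : ℕ, m ≤ M → ‖Ψ m‖ = ‖Ψ 0‖ := by
  have hzero : ∀ φ : V, L 0 φ = 0 := by
    intro φ
    have := hL_lin 1 0 0 φ
    simp at this
    linear_combination this
  have key : ∀ m : ℕ, 1 ≤ m → m ≤ M → ‖Ψ m‖ = ‖Ψ (m - 1)‖ := by
    intro m h1 h2
    set a := Ψ (m - 1) with ha
    set b := Ψ m with hb
    have h := hscheme m h1 h2 (a + b)
    set r := L (a + b) (a + b) with hr
    have hrre : r = conj r := by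
      conv_lhs => rw [hr, hL_herm]
    have hrim : r.im = 0 := by
      have := congrArg Complex.im hrre
      simp [Complex.conj_im] at this
      linarith
    have hRHS : L ((2⁻¹ : ℝ) • (a + b)) (a + b) = (2⁻¹ : ℂ) * r := by
      rw [RCLike.real_smul_eq_coe_smul (K := ℂ)]
      have := hL_lin (2⁻¹ : ℂ) (a + b) 0 (a + b)
      simpa [hzero] using this
    set c := ⟪a + b, b - a⟫_ℂ with hc
    have hinner : ⟪a + b, (τ⁻¹ : ℝ) • (b - a)⟫_ℂ = ((τ⁻¹ : ℝ) : ℂ) * c := by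
      rw [RCLike.real_smul_eq_coe_smul (K := ℂ), inner_smul_right]
      rfl
    have heq : Complex.I * (hbar : ℂ) * (((τ⁻¹ : ℝ) : ℂ) * c) = (2⁻¹ : ℂ) * r := by
      rw [← hinner, ← hRHS]; exact h
    have him := congrArg Complex.im heq
    simp [Complex.mul_im, Complex.mul_re, hrim] at him
    -- him should give hbar * τ⁻¹ * c.re = 0
    have hcre : c.re = 0 := by
      rcases him with h' | h' | h'
      · exact absurd h' (ne_of_gt hhbar)
      · exact absurd h' (ne_of_gt hτ)
      · exact h'
    have hexp : c = ⟪a, b⟫_ℂ - ⟪a, a⟫_ℂ + (⟪b, b⟫_ℂ - ⟪b, a⟫_ℂ) := by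
      rw [hc, inner_add_left, inner_sub_right, inner_sub_right]
    have hre : c.re = ‖b‖ ^ 2 - ‖a‖ ^ 2 := by
      have h1 : (⟪a, a⟫_ℂ).re = ‖a‖ ^ 2 := by
        rw [inner_self_eq_norm_sq_to_K]; norm_cast
      have h2 : (⟪b, b⟫_ℂ).re = ‖b‖ ^ 2 := by
        rw [inner_self_eq_norm_sq_to_K]; norm_cast
      have h3 : (⟪b, a⟫_ℂ).re = (⟪a, b⟫_ℂ).re := by
        rw [← inner_conj_symm b a, Complex.conj_re]
      rw [hexp]
      simp only [Complex.add_re, Complex.sub_re]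
      rw [h1, h2, h3]; ring
    have hsq : ‖b‖ ^ 2 = ‖a‖ ^ 2 := by rw [hre] at hcre; linarith
    nlinarith [norm_nonneg a, norm_nonneg b]
  intro m hm
  induction m with
  | zero => rfl
  | succ n ih =>
    have h := key (n + 1) (Nat.le_add_left 1 n) hm
    simp at h
    rw [h, ih (le_trans (Nat.le_succ n) hm)]
end

section
/- Let V be a finite-dimensional complex inner product space, let A : V → V and R : V → V be self-adjoint linear operators with R positive definite, let v̂ ∈ ℝ be such that ⟨(A + v̂R)w, w⟩ > 0 for every nonzero w ∈ V, and define the energy norm ‖w‖_E = √⟨(A + v̂R)w, w⟩ and the dual norm ‖F‖_* = max{ |⟨F, φ⟩| : φ ∈ V, ‖φ‖_E = 1 }. Let ħ > 0, τ > 0, M ≥ 1, and suppose Ψ⁰, …, Ψ^M ∈ V and F⁰, F¹, …, F^M ∈ V satisfy, for every 1 ≤ m ≤ M and every φ ∈ V, iħ·⟨R(Ψ^m − Ψ^{m−1})/τ, φ⟩ = ⟨A(Ψ^{m−1} + Ψ^m)/2, φ⟩ + ⟨F^m, φ⟩. Then max_{0 ≤ m ≤ M} ‖Ψ^m‖_E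 ≤ ‖Ψ⁰‖_E + 4·Σ_{m=1}^M ( (|v̂|/ħ)·‖F^m‖_* + ‖(F^m − F^{m−1})/τ‖_* )·τ + 4‖F⁰‖_*. -/
open Finset
open scoped InnerProductSpace

/-- Second stability bound (Proposition 2) for the Crank–Nicolson scheme in
abstract finite-dimensional Hilbert-space form: with `A`, `R` self-adjoint,
`R` positive definite, and a real shift `v̂` making the energy form
`⟨(A + v̂R)w, w⟩` positive definite, the scheme
`iħ⟨R(Ψ^m − Ψ^{m−1})/τ, φ⟩ = ⟨A(Ψ^{m−1}+Ψ^m)/2, φ⟩ + ⟨F^m, φ⟩` satisfies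
`max_m ‖Ψ^m‖_E ≤ ‖Ψ⁰‖_E + 4∑_{m=1}^M ((|v̂|/ħ)‖F^m‖_* + ‖(F^m−F^{m−1})/τ‖_*)τ
+ 4‖F⁰‖_*`. The pairing `⟨w, φ⟩` (linear in `w`, conjugate-linear in `φ`) is
realized as Mathlib's inner product `⟪φ, w⟫_ℂ`. -/
theorem crank_nicolson_second_stability_bound
    {V : Type*} [NormedAddCommGroup V] [InnerProductSpace ℂ V]
    [FiniteDimensional ℂ V]
    (A R : V →ₗ[ℂ] V) (hA : A.IsSymmetric) (hR : R.IsSymmetric)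
    (hRpos : ∀ w : V, w ≠ 0 → 0 < (⟪R w, w⟫_ℂ).re)
    (v : ℝ) (hv : ∀ w : V, w ≠ 0 → 0 < (⟪(A + (v : ℂ) • R) w, w⟫_ℂ).re)
    (normE : V → ℝ)
    (hnormE : ∀ w : V, normE w = Real.sqrt (⟪(A + (v : ℂ) • R) w, w⟫_ℂ).re)
    (dual : V → ℝ)
    (hdual : ∀ F : V,
      dual F = sSup ((fun φ : V => ‖⟪φ, F⟫_ℂ‖) '' {φ : V | normE φ = 1}))
    (hbar τ : ℝ) (hhbar : 0 < hbar) (hτ : 0 < τ)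
    (M : ℕ) (hM : 1 ≤ M) (Ψ F : ℕ → V)
    (hscheme : ∀ m : ℕ, 1 ≤ m → m ≤ M → ∀ φ : V,
      Complex.I * (hbar : ℂ) * ⟪φ, (τ⁻¹ : ℝ) • R (Ψ m - Ψ (m - 1))⟫_ℂ
        = ⟪φ, (2⁻¹ : ℝ) • A (Ψ (m - 1) + Ψ m)⟫_ℂ + ⟪φ, F m⟫_ℂ) :
    ∀ m : ℕ, m ≤ M →
      normE (Ψ m)
        ≤ normE (Ψ 0)
          + 4 * ∑ l ∈ Icc 1 M,
              ((|v| / hbar) * dual (F l) + dual ((τ⁻¹ : ℝ) • (F l - F (l - 1)))) * τ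
          + 4 * dual (F 0) := by
  -- notation shortcuts
  set B : V →ₗ[ℂ] V := A + (v : ℂ) • R with hBdef
  intro m₀ hm₀
  have hn0 : normE (0 : V) = 0 := by
    rw [hnormE]; simp
  rcases subsingleton_or_nontrivial V with hV | hV
  · -- trivial space
    have hz : ∀ w : V, w = 0 := fun w => Subsingleton.elim w 0
    have hdz : ∀ G : V, dual G = 0 := by
      intro G
      rw [hdual]
      have hempty : {φ : V | normE φ = 1} = (∅ : Set V) := by
        ext φ
        simp only [Set.mem_setOf_eq, Set.mem_empty_iff_false, iff_false]
        rw [hz φ, hn0]; norm_num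
      rw [hempty, Set.image_empty, Real.sSup_empty]
    rw [hz (Ψ m₀), hz (Ψ 0), hn0]
    simp [hdz]
  -- nontrivial space
  -- basic algebraic lemmas
  have hsmul : ∀ (r : ℝ) (x y : V), ⟪x, r • y⟫_ℂ = (r : ℂ) * ⟪x, y⟫_ℂ := by
    intro r x y
    rw [RCLike.real_smul_eq_coe_smul (K := ℂ), inner_smul_right]
    norm_num
  have symRe : ∀ (T : V →ₗ[ℂ] V), T.IsSymmetric → ∀ x y : V,
      (⟪x, T y⟫_ℂ).re = (⟪y, T x⟫_ℂ).re := by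
    intro T hT x y
    have h : ⟪x, T y⟫_ℂ = (starRingEnd ℂ) ⟪y, T x⟫_ℂ := by rw [← inner_conj_symm, hT]
    rw [h, Complex.conj_re]
  have selfIm : ∀ (T : V →ₗ[ℂ] V), T.IsSymmetric → ∀ x : V, (⟪x, T x⟫_ℂ).im = 0 := by
    intro T hT x
    have h1 := congrArg Complex.im (hT x x)
    have h2 := Complex.conj_im ⟪T x, x⟫_ℂ
    rw [inner_conj_symm] at h2
    linarith
  have hB : B.IsSymmetric := by
    intro x y
    simp only [hBdef, LinearMap.add_apply, LinearMap.smul_apply, inner_add_left,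
      inner_add_right, inner_smul_left, inner_smul_right, hA x y, hR x y, Complex.conj_ofReal]
  have hEflip : ∀ w : V, (⟪B w, w⟫_ℂ).re = (⟪w, B w⟫_ℂ).re := by
    intro w
    have h : ⟪B w, w⟫_ℂ = (starRingEnd ℂ) ⟪w, B w⟫_ℂ := (inner_conj_symm _ _).symm
    rw [h, Complex.conj_re]
  have hEexp : ∀ w : V, (⟪w, B w⟫_ℂ).re = (⟪w, A w⟫_ℂ).re + v * (⟪w, R w⟫_ℂ).re := by
    intro w
    rw [hBdef, LinearMap.add_apply, LinearMap.smul_apply, inner_add_right, inner_smul_right,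
      Complex.add_re, Complex.re_ofReal_mul]
  have hEnonneg : ∀ w : V, 0 ≤ (⟪w, B w⟫_ℂ).re := by
    intro w
    by_cases hw : w = 0
    · subst hw; simp
    · rw [← hEflip]; exact (hv w hw).le
  have hnorm_sq : ∀ w : V, normE w * normE w = (⟪w, B w⟫_ℂ).re := by
    intro w
    rw [hnormE, hEflip w]
    exact Real.mul_self_sqrt (hEnonneg w)
  have hnormE_nonneg : ∀ w : V, 0 ≤ normE w := by
    intro w; rw [hnormE]; exact Real.sqrt_nonneg _
  have hnormE_pos : ∀ w : V, w ≠ 0 → 0 < normE w := by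
    intro w hw; rw [hnormE]; exact Real.sqrt_pos.mpr (hv w hw)
  have hsmulL : ∀ (r : ℝ) (x y : V), ⟪r • x, y⟫_ℂ = (r : ℂ) * ⟪x, y⟫_ℂ := by
    intro r x y
    rw [RCLike.real_smul_eq_coe_smul (K := ℂ), inner_smul_left, RCLike.conj_ofReal]
    norm_num
  have hEsmul : ∀ (r : ℝ) (w : V), (⟪r • w, B (r • w)⟫_ℂ).re = r ^ 2 * (⟪w, B w⟫_ℂ).re := by
    intro r w
    rw [B.map_smul_of_tower, hsmul, hsmulL, ← mul_assoc, ← Complex.ofReal_mul,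
      Complex.re_ofReal_mul]
    ring
  have hnormE_smul : ∀ (r : ℝ) (w : V), 0 ≤ r → normE (r • w) = r * normE w := by
    intro r w hr
    rw [hnormE, hnormE, hEflip, hEflip, hEsmul, Real.sqrt_mul (sq_nonneg r),
      Real.sqrt_sq hr]
  -- coercivity constant
  obtain ⟨c, hc, hcoer⟩ : ∃ c > 0, ∀ φ : V, normE φ = 1 → ‖φ‖ ^ 2 ≤ c := by
    have hcont : Continuous fun w : V => (⟪w, B w⟫_ℂ).re :=
      Complex.continuous_re.comp (continuous_id.inner B.continuous_of_finiteDimensional)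
    have hcomp : IsCompact (Metric.sphere (0 : V) 1) := isCompact_sphere 0 1
    have hne : (Metric.sphere (0 : V) 1).Nonempty := NormedSpace.sphere_nonempty.mpr zero_le_one
    obtain ⟨x0, hx0mem, hx0min⟩ := hcomp.exists_isMinOn hne hcont.continuousOn
    have hx0norm : ‖x0‖ = 1 := by simpa using hx0mem
    have hx0ne : x0 ≠ 0 := by
      intro h; rw [h, norm_zero] at hx0norm; norm_num at hx0norm
    have hcpos : 0 < (⟪x0, B x0⟫_ℂ).re := by rw [← hEflip]; exact hv x0 hx0ne
    refine ⟨((⟪x0, B x0⟫_ℂ).re)⁻¹, inv_pos.mpr hcpos, ?_⟩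
    intro φ hφ
    have hEφ : (⟪φ, B φ⟫_ℂ).re = 1 := by
      have h1 : normE φ * normE φ = 1 := by rw [hφ]; norm_num
      rw [← hnorm_sq]; exact h1
    have hφne : φ ≠ 0 := by
      intro h; rw [h, hn0] at hφ; norm_num at hφ
    have hφnorm : 0 < ‖φ‖ := norm_pos_iff.mpr hφne
    have hunit : ‖φ‖⁻¹ • φ ∈ Metric.sphere (0 : V) 1 := by
      simp [norm_smul, abs_of_pos (inv_pos.mpr hφnorm), inv_mul_cancel₀ hφnorm.ne']
    have hmin := isMinOn_iff.mp hx0min _ hunit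
    rw [hEsmul] at hmin
    -- hmin : (⟪x0, B x0⟫).re ≤ ‖φ‖⁻¹ ^ 2 * (⟪φ, B φ⟫).re
    rw [hEφ, mul_one] at hmin
    have h2 : (⟪x0, B x0⟫_ℂ).re * ‖φ‖ ^ 2 ≤ 1 := by
      have := mul_le_mul_of_nonneg_right hmin (sq_nonneg ‖φ‖)
      calc (⟪x0, B x0⟫_ℂ).re * ‖φ‖ ^ 2 ≤ ‖φ‖⁻¹ ^ 2 * ‖φ‖ ^ 2 := this
        _ = 1 := by field_simp
    have h3 := mul_le_mul_of_nonneg_left h2 (inv_pos.mpr hcpos).le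
    rwa [← mul_assoc, inv_mul_cancel₀ hcpos.ne', one_mul, mul_one] at h3
  -- dual norm facts
  have hbdd : ∀ G : V, BddAbove ((fun φ : V => ‖⟪φ, G⟫_ℂ‖) '' {φ : V | normE φ = 1}) := by
    intro G
    refine ⟨Real.sqrt c * ‖G‖, ?_⟩
    rintro x ⟨φ, hφ, rfl⟩
    have h1 : ‖φ‖ ≤ Real.sqrt c := by
      have h2 := hcoer φ hφ
      have h' : ‖φ‖ = Real.sqrt (‖φ‖ ^ 2) := by rw [Real.sqrt_sq (norm_nonneg φ)]
      rw [h']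
      exact Real.sqrt_le_sqrt h2
    calc ‖⟪φ, G⟫_ℂ‖ ≤ ‖φ‖ * ‖G‖ := by
          exact norm_inner_le_norm φ G
      _ ≤ Real.sqrt c * ‖G‖ := mul_le_mul_of_nonneg_right h1 (norm_nonneg G)
  have hSne : ∃ φ : V, normE φ = 1 := by
    obtain ⟨x0, hx0⟩ := exists_ne (0 : V)
    refine ⟨(normE x0)⁻¹ • x0, ?_⟩
    rw [hnormE_smul _ _ (inv_nonneg.mpr (hnormE_nonneg x0)),
      inv_mul_cancel₀ (hnormE_pos x0 hx0).ne']
  have hle : ∀ (φ G : V), ‖⟪φ, G⟫_ℂ‖ ≤ dual G * normE φ := by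
    intro φ G
    by_cases hφ : φ = 0
    · subst hφ; simp [hn0]
    · have hp := hnormE_pos φ hφ
      set ψ := (normE φ)⁻¹ • φ with hψ
      have hψ1 : normE ψ = 1 := by
        rw [hψ, hnormE_smul _ _ (inv_nonneg.mpr hp.le), inv_mul_cancel₀ hp.ne']
      have hmem : ‖⟪ψ, G⟫_ℂ‖
          ∈ (fun φ : V => ‖⟪φ, G⟫_ℂ‖) '' {φ : V | normE φ = 1} := ⟨ψ, hψ1, rfl⟩
      have h1 : ‖⟪ψ, G⟫_ℂ‖ ≤ dual G := by
        rw [hdual]; exact le_csSup (hbdd G) hmem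
      have h2 : ‖⟪ψ, G⟫_ℂ‖ = (normE φ)⁻¹ * ‖⟪φ, G⟫_ℂ‖ := by
        rw [hψ, hsmulL, norm_mul, Complex.norm_real, Real.norm_eq_abs, abs_of_pos (inv_pos.mpr hp)]
      rw [h2] at h1
      calc ‖⟪φ, G⟫_ℂ‖ = normE φ * ((normE φ)⁻¹ * ‖⟪φ, G⟫_ℂ‖) := by
            field_simp
        _ ≤ normE φ * dual G := mul_le_mul_of_nonneg_left h1 hp.le
        _ = dual G * normE φ := mul_comm _ _
  have hdual_nonneg : ∀ G : V, 0 ≤ dual G := by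
    obtain ⟨φ, hφ⟩ := hSne
    intro G
    have h1 := hle φ G
    rw [hφ, mul_one] at h1
    exact le_trans (norm_nonneg _) h1
  -- per-step energy identity
  have step : ∀ m : ℕ, 1 ≤ m → m ≤ M →
      (⟪Ψ m, B (Ψ m)⟫_ℂ).re - (⟪Ψ (m-1), B (Ψ (m-1))⟫_ℂ).re
        = -2 * (⟪Ψ m - Ψ (m-1), F m⟫_ℂ).re
          + (v * τ / hbar) * (⟪Ψ (m-1) + Ψ m, F m⟫_ℂ).im := by
    intro m h1m hmM
    set a := Ψ (m-1) with ha
    set b := Ψ m with hb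
    have e1 := hscheme m h1m hmM (b - a)
    have e2 := hscheme m h1m hmM (a + b)
    rw [hsmul, hsmul] at e1
    rw [hsmul, hsmul] at e2
    have hz1 : (⟪b - a, R (b - a)⟫_ℂ).im = 0 := selfIm R hR _
    have hw2 : (⟪a + b, A (a + b)⟫_ℂ).im = 0 := selfIm A hA _
    have re1 := congrArg Complex.re e1
    have im2 := congrArg Complex.im e2
    simp only [Complex.add_re, Complex.add_im, Complex.mul_re, Complex.mul_im,
      Complex.I_re, Complex.I_im, Complex.ofReal_re, Complex.ofReal_im, hz1, hw2] at re1 im2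
    rw [← ha, ← hb] at re1 im2
    have hz2 : (⟪b - a, A (a + b)⟫_ℂ).re = (⟪b, A b⟫_ℂ).re - (⟪a, A a⟫_ℂ).re := by
      rw [map_add, inner_add_right, inner_sub_left, inner_sub_left, Complex.add_re,
        Complex.sub_re, Complex.sub_re]
      linarith [symRe A hA b a]
    have hw1 : (⟪a + b, R (b - a)⟫_ℂ).re = (⟪b, R b⟫_ℂ).re - (⟪a, R a⟫_ℂ).re := by
      rw [map_sub, inner_sub_right, inner_add_left, inner_add_left, Complex.sub_re,
        Complex.add_re, Complex.add_re]
      linarith [symRe R hR a b]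
    rw [hz2] at re1
    rw [hw1] at im2
    have k1 : (⟪b, A b⟫_ℂ).re - (⟪a, A a⟫_ℂ).re = -2 * (⟪b - a, F m⟫_ℂ).re := by
      rw [hz1] at re1
      ring_nf at re1 ⊢
      linarith
    have k2 : (⟪b, R b⟫_ℂ).re - (⟪a, R a⟫_ℂ).re = τ / hbar * (⟪a + b, F m⟫_ℂ).im := by
      rw [hw2] at im2
      field_simp at im2 ⊢
      linarith
    rw [hEexp a, hEexp b]
    linear_combination k1 + v * k2
  -- telescoped energy identity
  have main : ∀ k : ℕ, k ≤ M →
      (⟪Ψ k, B (Ψ k)⟫_ℂ).re + 2 * (⟪Ψ k, F k⟫_ℂ).re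
        = (⟪Ψ 0, B (Ψ 0)⟫_ℂ).re + 2 * (⟪Ψ 0, F 0⟫_ℂ).re
          + ∑ m ∈ Icc 1 k, (2 * (⟪Ψ (m-1), F m - F (m-1)⟫_ℂ).re
              + (v * τ / hbar) * (⟪Ψ (m-1) + Ψ m, F m⟫_ℂ).im) := by
    intro k
    induction k with
    | zero => intro _; simp
    | succ k ih =>
      intro hk1
      have hkM : k ≤ M := le_trans (Nat.le_succ k) hk1
      have ihk := ih hkM
      have hstep := step (k+1) (Nat.succ_le_succ (Nat.zero_le k)) hk1
      simp only [Nat.add_sub_cancel] at hstep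
      rw [Finset.sum_Icc_succ_top (Nat.succ_le_succ (Nat.zero_le k))]
      simp only [Nat.add_sub_cancel]
      have hsub : (⟪Ψ (k+1) - Ψ k, F (k+1)⟫_ℂ).re
          = (⟪Ψ (k+1), F (k+1)⟫_ℂ).re - (⟪Ψ k, F (k+1)⟫_ℂ).re := by
        rw [inner_sub_left, Complex.sub_re]
      have hsub2 : (⟪Ψ k, F (k+1) - F k⟫_ℂ).re
          = (⟪Ψ k, F (k+1)⟫_ℂ).re - (⟪Ψ k, F k⟫_ℂ).re := by
        rw [inner_sub_right, Complex.sub_re]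
      rw [hsub] at hstep
      linarith
  -- telescoping of F
  have hFtel : ∀ k : ℕ, F k = F 0 + ∑ m ∈ Icc 1 k, (F m - F (m-1)) := by
    intro k
    induction k with
    | zero => simp
    | succ k ih =>
      rw [Finset.sum_Icc_succ_top (Nat.succ_le_succ (Nat.zero_le k))]
      simp only [Nat.add_sub_cancel]
      rw [← add_assoc, ← ih]
      abel
  -- the maximum of the energy norms
  have hIccne : (Icc 0 M).Nonempty := ⟨0, by simp⟩
  set Q := (Icc 0 M).sup' hIccne (fun k => normE (Ψ k)) with hQdef
  have hQge : ∀ k, k ≤ M → normE (Ψ k) ≤ Q := by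
    intro k hk
    exact Finset.le_sup' (fun k => normE (Ψ k)) (Finset.mem_Icc.mpr ⟨Nat.zero_le k, hk⟩)
  have hQ0 : 0 ≤ Q := le_trans (hnormE_nonneg (Ψ 0)) (hQge 0 (Nat.zero_le M))
  -- scaled difference bound
  have hdiff : ∀ (φ : V) (mm : ℕ), ‖⟪φ, F mm - F (mm-1)⟫_ℂ‖
      ≤ τ * dual ((τ⁻¹ : ℝ) • (F mm - F (mm-1))) * normE φ := by
    intro φ mm
    have hx : F mm - F (mm-1) = τ • ((τ⁻¹ : ℝ) • (F mm - F (mm-1))) := by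
      rw [smul_smul, mul_inv_cancel₀ hτ.ne', one_smul]
    calc ‖⟪φ, F mm - F (mm-1)⟫_ℂ‖
        = ‖⟪φ, τ • ((τ⁻¹ : ℝ) • (F mm - F (mm-1)))⟫_ℂ‖ := by rw [← hx]
      _ = τ * ‖⟪φ, (τ⁻¹ : ℝ) • (F mm - F (mm-1))⟫_ℂ‖ := by
          rw [hsmul, norm_mul, Complex.norm_real, Real.norm_eq_abs, abs_of_pos hτ]
      _ ≤ τ * (dual ((τ⁻¹ : ℝ) • (F mm - F (mm-1))) * normE φ) :=
          mul_le_mul_of_nonneg_left (hle φ _) hτ.le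
      _ = τ * dual ((τ⁻¹ : ℝ) • (F mm - F (mm-1))) * normE φ := by ring
  set SD := ∑ l ∈ Icc 1 M, τ * dual ((τ⁻¹ : ℝ) • (F l - F (l-1))) with hSDdef
  set SG := ∑ l ∈ Icc 1 M, |v| / hbar * dual (F l) * τ with hSGdef
  have hSD0 : 0 ≤ SD := Finset.sum_nonneg fun l _ => mul_nonneg hτ.le (hdual_nonneg _)
  have hSG0 : 0 ≤ SG := Finset.sum_nonneg fun l _ =>
    mul_nonneg (mul_nonneg (div_nonneg (abs_nonneg v) hhbar.le) (hdual_nonneg _)) hτ.le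
  -- bound on the pairing with F k
  have hFk : ∀ k, k ≤ M → ‖⟪Ψ k, F k⟫_ℂ‖ ≤ Q * dual (F 0) + Q * SD := by
    intro k hk
    have h1 : ⟪Ψ k, F k⟫_ℂ = ⟪Ψ k, F 0⟫_ℂ + ∑ mm ∈ Icc 1 k, ⟪Ψ k, F mm - F (mm-1)⟫_ℂ := by
      conv_lhs => rw [hFtel k]
      rw [inner_add_right, inner_sum]
    have h2 : ‖⟪Ψ k, F 0⟫_ℂ‖ ≤ dual (F 0) * Q :=
      le_trans (hle _ _) (mul_le_mul_of_nonneg_left (hQge k hk) (hdual_nonneg _))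
    have h3 : ∀ mm ∈ Icc 1 k, ‖⟪Ψ k, F mm - F (mm-1)⟫_ℂ‖
        ≤ τ * dual ((τ⁻¹ : ℝ) • (F mm - F (mm-1))) * Q := by
      intro mm _
      exact le_trans (hdiff _ mm) (mul_le_mul_of_nonneg_left (hQge k hk)
        (mul_nonneg hτ.le (hdual_nonneg _)))
    calc ‖⟪Ψ k, F k⟫_ℂ‖
        ≤ ‖⟪Ψ k, F 0⟫_ℂ‖ + ∑ mm ∈ Icc 1 k, ‖⟪Ψ k, F mm - F (mm-1)⟫_ℂ‖ := by
          rw [h1]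
          exact le_trans (norm_add_le _ _)
            (add_le_add_right (norm_sum_le _ _) _)
      _ ≤ dual (F 0) * Q + ∑ mm ∈ Icc 1 k, τ * dual ((τ⁻¹ : ℝ) • (F mm - F (mm-1))) * Q :=
          add_le_add h2 (Finset.sum_le_sum h3)
      _ ≤ dual (F 0) * Q + ∑ mm ∈ Icc 1 M, τ * dual ((τ⁻¹ : ℝ) • (F mm - F (mm-1))) * Q := by
          refine add_le_add_right (Finset.sum_le_sum_of_subset_of_nonneg
            (Finset.Icc_subset_Icc_right hk) ?_) _
          intro i _ _
          exact mul_nonneg (mul_nonneg hτ.le (hdual_nonneg _)) hQ0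
      _ = Q * dual (F 0) + Q * SD := by
          rw [hSDdef, ← Finset.sum_mul]
          ring
  -- per-term bound on the telescoped sum
  have hterm : ∀ m ∈ Icc 1 M,
      2 * (⟪Ψ (m-1), F m - F (m-1)⟫_ℂ).re + (v * τ / hbar) * (⟪Ψ (m-1) + Ψ m, F m⟫_ℂ).im
        ≤ 2 * Q * (τ * dual ((τ⁻¹ : ℝ) • (F m - F (m-1))))
          + 2 * Q * (|v| / hbar * dual (F m) * τ) := by
    intro m hm
    obtain ⟨h1m, hmM⟩ := Finset.mem_Icc.mp hm
    have hm1M : m - 1 ≤ M := le_trans (Nat.sub_le m 1) hmM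
    have hb1 : (⟪Ψ (m-1), F m - F (m-1)⟫_ℂ).re
        ≤ τ * dual ((τ⁻¹ : ℝ) • (F m - F (m-1))) * Q := by
      refine le_trans (Complex.re_le_norm _) (le_trans (hdiff _ m) ?_)
      exact mul_le_mul_of_nonneg_left (hQge _ hm1M) (mul_nonneg hτ.le (hdual_nonneg _))
    have hb2 : (v * τ / hbar) * (⟪Ψ (m-1) + Ψ m, F m⟫_ℂ).im
        ≤ (|v| * τ / hbar) * (2 * (dual (F m) * Q)) := by
      have habs : |(⟪Ψ (m-1) + Ψ m, F m⟫_ℂ).im| ≤ 2 * (dual (F m) * Q) := by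
        have h4 : ‖⟪Ψ (m-1) + Ψ m, F m⟫_ℂ‖
            ≤ ‖⟪Ψ (m-1), F m⟫_ℂ‖ + ‖⟪Ψ m, F m⟫_ℂ‖ := by
          rw [inner_add_left]; exact norm_add_le _ _
        have h5 : ‖⟪Ψ (m-1), F m⟫_ℂ‖ ≤ dual (F m) * Q :=
          le_trans (hle _ _) (mul_le_mul_of_nonneg_left (hQge _ hm1M) (hdual_nonneg _))
        have h6 : ‖⟪Ψ m, F m⟫_ℂ‖ ≤ dual (F m) * Q :=
          le_trans (hle _ _) (mul_le_mul_of_nonneg_left (hQge _ hmM) (hdual_nonneg _))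
        have h7 := Complex.abs_im_le_norm ⟪Ψ (m-1) + Ψ m, F m⟫_ℂ
        linarith
      calc (v * τ / hbar) * (⟪Ψ (m-1) + Ψ m, F m⟫_ℂ).im
          ≤ |(v * τ / hbar) * (⟪Ψ (m-1) + Ψ m, F m⟫_ℂ).im| := le_abs_self _
        _ = (|v| * τ / hbar) * |(⟪Ψ (m-1) + Ψ m, F m⟫_ℂ).im| := by
            rw [abs_mul, abs_div, abs_mul, abs_of_pos hτ, abs_of_pos hhbar]
        _ ≤ (|v| * τ / hbar) * (2 * (dual (F m) * Q)) := by
            refine mul_le_mul_of_nonneg_left habs ?_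
            positivity
    have e1 : 2 * Q * (τ * dual ((τ⁻¹ : ℝ) • (F m - F (m-1))))
        = 2 * (τ * dual ((τ⁻¹ : ℝ) • (F m - F (m-1))) * Q) := by ring
    have e2 : 2 * Q * (|v| / hbar * dual (F m) * τ)
        = |v| * τ / hbar * (2 * (dual (F m) * Q)) := by ring
    rw [e1, e2]
    linarith
  -- bound on the telescoped sum
  have hsumb : ∀ k, k ≤ M →
      ∑ m ∈ Icc 1 k, (2 * (⟪Ψ (m-1), F m - F (m-1)⟫_ℂ).re
          + (v * τ / hbar) * (⟪Ψ (m-1) + Ψ m, F m⟫_ℂ).im)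
        ≤ 2 * Q * SD + 2 * Q * SG := by
    intro k hk
    have hsub : Icc 1 k ⊆ Icc 1 M := Finset.Icc_subset_Icc_right hk
    calc ∑ m ∈ Icc 1 k, (2 * (⟪Ψ (m-1), F m - F (m-1)⟫_ℂ).re
            + (v * τ / hbar) * (⟪Ψ (m-1) + Ψ m, F m⟫_ℂ).im)
        ≤ ∑ m ∈ Icc 1 k, (2 * Q * (τ * dual ((τ⁻¹ : ℝ) • (F m - F (m-1))))
            + 2 * Q * (|v| / hbar * dual (F m) * τ)) :=
          Finset.sum_le_sum (fun m hm => hterm m (hsub hm))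
      _ ≤ ∑ m ∈ Icc 1 M, (2 * Q * (τ * dual ((τ⁻¹ : ℝ) • (F m - F (m-1))))
            + 2 * Q * (|v| / hbar * dual (F m) * τ)) := by
          refine Finset.sum_le_sum_of_subset_of_nonneg hsub ?_
          intro i _ _
          have h1 : (0:ℝ) ≤ τ * dual ((τ⁻¹ : ℝ) • (F i - F (i-1))) :=
            mul_nonneg hτ.le (hdual_nonneg _)
          have h2 : (0:ℝ) ≤ |v| / hbar * dual (F i) * τ :=
            mul_nonneg (mul_nonneg (div_nonneg (abs_nonneg v) hhbar.le) (hdual_nonneg _)) hτ.le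
          have h3 : (0:ℝ) ≤ 2 * Q := by linarith
          exact add_nonneg (mul_nonneg h3 h1) (mul_nonneg h3 h2)
      _ = 2 * Q * SD + 2 * Q * SG := by
          rw [hSDdef, hSGdef, Finset.mul_sum, Finset.mul_sum, ← Finset.sum_add_distrib]
  -- energy bound at every time level
  have hboundk : ∀ k, k ≤ M → normE (Ψ k) * normE (Ψ k)
      ≤ Q * (normE (Ψ 0) + 4 * (SG + SD) + 4 * dual (F 0)) := by
    intro k hk
    have hmain := main k hk
    have hE0 : (⟪Ψ 0, B (Ψ 0)⟫_ℂ).re ≤ Q * normE (Ψ 0) := by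
      rw [← hnorm_sq]
      exact mul_le_mul_of_nonneg_right (hQge 0 (Nat.zero_le M)) (hnormE_nonneg _)
    have h0F : (⟪Ψ 0, F 0⟫_ℂ).re ≤ dual (F 0) * Q :=
      le_trans (Complex.re_le_norm _) (le_trans (hle _ _)
        (mul_le_mul_of_nonneg_left (hQge 0 (Nat.zero_le M)) (hdual_nonneg _)))
    have hkF : -(⟪Ψ k, F k⟫_ℂ).re ≤ Q * dual (F 0) + Q * SD := by
      refine le_trans ?_ (hFk k hk)
      exact le_trans (neg_le_abs _) (Complex.abs_re_le_norm _)
    have hsumk := hsumb k hk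
    have hQSG : 0 ≤ Q * SG := mul_nonneg hQ0 hSG0
    have hrhs : Q * (normE (Ψ 0) + 4 * (SG + SD) + 4 * dual (F 0))
        = Q * normE (Ψ 0) + 4 * (Q * SG) + 4 * (Q * SD) + 4 * (Q * dual (F 0)) := by ring
    rw [hnorm_sq, hrhs]
    linarith
  -- conclusion
  obtain ⟨k0, hk0mem, hk0eq⟩ := Finset.exists_mem_eq_sup' hIccne (fun k => normE (Ψ k))
  have hk0M : k0 ≤ M := (Finset.mem_Icc.mp hk0mem).2
  have hQQ : Q * Q ≤ Q * (normE (Ψ 0) + 4 * (SG + SD) + 4 * dual (F 0)) := by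
    calc Q * Q = normE (Ψ k0) * normE (Ψ k0) := by rw [hQdef, hk0eq]
      _ ≤ _ := hboundk k0 hk0M
  have hC0 : 0 ≤ normE (Ψ 0) + 4 * (SG + SD) + 4 * dual (F 0) := by
    have h1 := hnormE_nonneg (Ψ 0)
    have h2 := hdual_nonneg (F 0)
    linarith
  have hQC : Q ≤ normE (Ψ 0) + 4 * (SG + SD) + 4 * dual (F 0) := by
    rcases hQ0.eq_or_lt with h | h
    · rw [← h]; exact hC0
    · exact le_of_mul_le_mul_left hQQ h
  have hfin : ∑ l ∈ Icc 1 M,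
      ((|v| / hbar) * dual (F l) + dual ((τ⁻¹ : ℝ) • (F l - F (l - 1)))) * τ = SG + SD := by
    rw [hSGdef, hSDdef, ← Finset.sum_add_distrib]
    exact Finset.sum_congr rfl fun l _ => by ring
  calc normE (Ψ m₀) ≤ Q := hQge m₀ hm₀
    _ ≤ normE (Ψ 0) + 4 * (SG + SD) + 4 * dual (F 0) := hQC
    _ = normE (Ψ 0) + 4 * ∑ l ∈ Icc 1 M,
          ((|v| / hbar) * dual (F l) + dual ((τ⁻¹ : ℝ) • (F l - F (l - 1)))) * τ
          + 4 * dual (F 0) := by rw [hfin]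
end
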